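/- Let (G,<) be an ordered group, K a division ring, and K((G,<)) the Malcev-Neumann series field with its natural valuation ω(f) = min supp f. Suppose π : G → A is a surjective homomorphism of ordered groups onto a nontrivial subgroup A of (ℝ,+). Then K((G,<)) is complete with respect to the metric d(f,g) = c^{π(ω(f-g))} for a fixed constant c ∈ (0,1): every Cauchy sequence in K((G,<)) converges. -/
import Mathlib

/-- `x` is the minimum of the support of the Malcev-Neumann series `f`
(described through its coefficient function `coeff`). -/
def IsMinSupp {K G D : Type*} [Zero K] [LE G] (coeff : D → G → K) (f : D) (x : G) : Prop :=
  coeff f x ≠ 0 ∧ ∀ y : G, coeff f y ≠ 0 → x ≤ y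

/-- Let `K((G,<))` be a Malcev-Neumann series field (axiomatised by its
coefficient function) with natural valuation `ω(f) = min supp f`, and let `π : G → ℝ` be a
homomorphism of ordered groups onto a nontrivial subgroup of `(ℝ, +)`.  Then `K((G,<))` is
complete with respect to the metric `d(f,g) = c^(π(ω(f-g)))`, `c ∈ (0,1)` fixed: every
Cauchy sequence converges. -/
theorem malcev_neumann_complete
    (K G D : Type*) [DivisionRing K] [Group G] [LinearOrder G]
    [CovariantClass G G (· * ·) (· ≤ ·)]
    [CovariantClass G G (Function.swap (· * ·)) (· ≤ ·)]
    [Ring D] (coeff : D → G → K)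
    (hext : Function.Injective coeff)
    (hadd : ∀ f g : D, ∀ x : G, coeff (f + g) x = coeff f x + coeff g x)
    (hwf : ∀ f : D, (Function.support (coeff f)).IsWF)
    (hsurj : ∀ F : G → K, (Function.support F).IsWF → ∃ f : D, coeff f = F)
    (hmul : ∀ f g : D, ∀ x : G, coeff (f * g) x =
      ∑ᶠ p : G × G, if p.1 * p.2 = x then coeff f p.1 * coeff g p.2 else 0)
    (π : G → ℝ)
    (hπ_hom : ∀ x y : G, π (x * y) = π x + π y)
    (hπ_mono : Monotone π)
    (hπ_nontrivial : ∃ x : G, π x ≠ 0)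
    (c : ℝ) (hc0 : 0 < c) (hc1 : c < 1)
    (u : ℕ → D)
    (hu : ∀ ε : ℝ, 0 < ε → ∃ N : ℕ, ∀ p q : ℕ, N ≤ p → N ≤ q →
      (u p - u q = 0 ∨ ∃ x : G, IsMinSupp coeff (u p - u q) x ∧ c ^ (π x) < ε)) :
    ∃ l : D, ∀ ε : ℝ, 0 < ε → ∃ N : ℕ, ∀ p : ℕ, N ≤ p →
      (u p - l = 0 ∨ ∃ x : G, IsMinSupp coeff (u p - l) x ∧ c ^ (π x) < ε) := by
  -- basic coefficient algebra
  have hzero : ∀ x : G, coeff (0 : D) x = 0 := by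
    intro x
    have h := hadd 0 0 x
    rw [add_zero] at h
    exact (left_eq_add.mp h)
  have hsub : ∀ f g : D, ∀ x : G, coeff (f - g) x = coeff f x - coeff g x := by
    intro f g x
    have h := hadd (f - g) g x
    rw [sub_add_cancel] at h
    exact eq_sub_of_add_eq h.symm
  -- key consequence of Cauchyness: eventual agreement of coefficients below any level t
  have agree : ∀ t : ℝ, ∃ N : ℕ, ∀ p q : ℕ, N ≤ p → N ≤ q →
      ∀ y : G, π y ≤ t → coeff (u p) y = coeff (u q) y := by
    intro t
    obtain ⟨N, hN⟩ := hu (c ^ t) (Real.rpow_pos_of_pos hc0 t)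
    refine ⟨N, fun p q hp hq y hy => ?_⟩
    have h0 : coeff (u p - u q) y = 0 := by
      rcases hN p q hp hq with h | ⟨x, ⟨hx0, hxmin⟩, hxε⟩
      · rw [h]; exact hzero y
      · by_contra hne
        have hxy := hπ_mono (hxmin y hne)
        have : t < π x := (Real.rpow_lt_rpow_left_iff_of_base_lt_one hc0 hc1).mp hxε
        linarith
    have := hsub (u p) (u q) y
    rw [h0] at this
    exact sub_eq_zero.mp this.symm
  choose Nt hNt using agree
  -- the limit coefficient function
  set F : G → K := fun g => coeff (u (Nt (π g))) g with hFdef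
  have hF : ∀ (t : ℝ) (g : G), π g ≤ t → ∀ p : ℕ, Nt t ≤ p → coeff (u p) g = F g := by
    intro t g hg p hp
    have h1 : coeff (u p) g = coeff (u (max p (Nt (π g)))) g :=
      hNt t p _ hp (le_trans hp (le_max_left _ _)) g hg
    have h2 : coeff (u (max p (Nt (π g)))) g = coeff (u (Nt (π g))) g :=
      hNt (π g) _ _ (le_max_right _ _) le_rfl g le_rfl
    rw [h1, h2]
  -- F has well-founded support
  have hFwf : (Function.support F).IsWF := by
    rw [Set.isWF_iff_no_descending_seq]
    intro g hganti hgmem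
    have key : ∀ n : ℕ, g n ∈ Function.support (coeff (u (Nt (π (g 0))))) := by
      intro n
      have hle : π (g n) ≤ π (g 0) := hπ_mono (hganti.antitone (Nat.zero_le n))
      have := hF (π (g 0)) (g n) hle (Nt (π (g 0))) le_rfl
      simpa [Function.mem_support, this] using hgmem n
    exact (Set.isWF_iff_no_descending_seq.mp (hwf (u (Nt (π (g 0)))))) g hganti key
  obtain ⟨l, hl⟩ := hsurj F hFwf
  refine ⟨l, ?_⟩
  -- π takes values with c ^ (π g) arbitrarily small
  have hone : π 1 = 0 := by
    have := hπ_hom 1 1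
    rw [mul_one] at this
    linarith
  have hsmall : ∀ ε : ℝ, 0 < ε → ∃ g : G, c ^ (π g) < ε := by
    intro ε hε
    obtain ⟨x, hx⟩ := hπ_nontrivial
    obtain ⟨x, hx⟩ : ∃ x : G, 0 < π x := by
      rcases lt_or_gt_of_ne hx with h | h
      · refine ⟨x⁻¹, ?_⟩
        have := hπ_hom x x⁻¹
        rw [mul_inv_cancel] at this
        rw [hone] at this
        linarith
      · exact ⟨x, h⟩
    have hcx1 : c ^ (π x) < 1 := Real.rpow_lt_one hc0.le hc1 hx
    have hpow : ∀ n : ℕ, π (x ^ n) = n * π x := by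
      intro n
      induction n with
      | zero => simpa using hone
      | succ k ih =>
        rw [pow_succ, hπ_hom, ih]
        push_cast
        ring
    obtain ⟨n, hn⟩ := exists_pow_lt_of_lt_one hε hcx1
    refine ⟨x ^ n, ?_⟩
    rw [hpow n]
    calc c ^ ((n : ℝ) * π x) = (c ^ (π x)) ^ (n : ℝ) := by
          rw [mul_comm, Real.rpow_mul hc0.le]
      _ = (c ^ (π x)) ^ n := Real.rpow_natCast _ n
      _ < ε := hn
  -- conclusion
  intro ε hε
  obtain ⟨g₀, hg₀⟩ := hsmall ε hε
  refine ⟨Nt (π g₀), fun p hp => ?_⟩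
  have hlow : ∀ y : G, π y ≤ π g₀ → coeff (u p - l) y = 0 := by
    intro y hy
    rw [hsub, hl]
    rw [hF (π g₀) y hy p hp]
    exact sub_self _
  by_cases h0 : u p - l = 0
  · exact Or.inl h0
  · right
    have hne : (Function.support (coeff (u p - l))).Nonempty := by
      by_contra h
      rw [Set.not_nonempty_iff_eq_empty, Function.support_eq_empty_iff] at h
      apply h0
      apply hext
      rw [h]
      funext z
      exact (hzero z).symm
    set x := (hwf (u p - l)).min hne with hxdef
    have hxmem : coeff (u p - l) x ≠ 0 := (hwf (u p - l)).min_mem hne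
    refine ⟨x, ⟨hxmem, fun y hy => (hwf (u p - l)).min_le hne hy⟩, ?_⟩
    have hgt : π g₀ < π x := by
      by_contra h
      exact hxmem (hlow x (le_of_not_gt h))
    calc c ^ (π x) < c ^ (π g₀) :=
          (Real.rpow_lt_rpow_left_iff_of_base_lt_one hc0 hc1).mpr hgt
      _ < ε := hg₀
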